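/- arXiv:2408.14973 — 2 statements merged into one kernel-verified Lean document; each statement's English description precedes it below -/
import Mathlib

section
/- Let r ≥ 0 and suppose a sequence (x_n) in an S-metric space (X,S) is statistically convergent to x'. Then st-LIM^r x_n = B_S[x',r], the closed ball of radius r centered at x'. -/
open Filter

open scoped Classical in
/-- Natural density: `A ⊆ ℕ` has density `d` if `|{k ∈ A : k < n}|/n → d`. -/
def HasDensity (A : Set ℕ) (d : ℝ) : Prop :=
  Filter.Tendsto
    (fun n : ℕ => (((Finset.range n).filter (fun k => k ∈ A)).card : ℝ) / n)
    Filter.atTop (nhds d)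

/-- `S` is an S-metric on `X`. -/
structure IsSMetric {X : Type*} (S : X → X → X → ℝ) : Prop where
  nonneg : ∀ x y z, 0 ≤ S x y z
  eq_zero_iff : ∀ x y z, S x y z = 0 ↔ x = y ∧ y = z
  triangle : ∀ x y z a, S x y z ≤ S x x a + S y y a + S z z a

/-- Ordinary convergence of a sequence in an S-metric space. -/
def SConvergesTo {X : Type*} (S : X → X → X → ℝ) (x : ℕ → X) (l : X) : Prop :=
  ∀ ε : ℝ, 0 < ε → ∃ N : ℕ, ∀ n ≥ N, S (x n) (x n) l < ε

/-- Statistical convergence of a sequence in an S-metric space. -/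
def SStatConvergesTo {X : Type*} (S : X → X → X → ℝ) (x : ℕ → X) (l : X) : Prop :=
  ∀ ε : ℝ, 0 < ε → HasDensity {n : ℕ | ε ≤ S (x n) (x n) l} 0

/-- Cauchy sequence in an S-metric space. -/
def SCauchy {X : Type*} (S : X → X → X → ℝ) (x : ℕ → X) : Prop :=
  ∀ ε : ℝ, 0 < ε → ∃ k : ℕ, ∀ n ≥ k, ∀ m ≥ k, S (x n) (x n) (x m) < ε

/-- Statistically Cauchy sequence in an S-metric space. -/
def SStatCauchy {X : Type*} (S : X → X → X → ℝ) (x : ℕ → X) : Prop :=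
  ∀ ε : ℝ, 0 < ε → ∃ N : ℕ, HasDensity {n : ℕ | ε ≤ S (x n) (x n) (x N)} 0

/-- Statistically bounded sequence in an S-metric space. -/
def SStatBounded {X : Type*} (S : X → X → X → ℝ) (x : ℕ → X) : Prop :=
  ∀ u : X, ∃ B : ℝ, 0 < B ∧ HasDensity {n : ℕ | B ≤ S (x n) (x n) u} 0

/-- Rough convergence with roughness degree `r`. -/
def SRoughConvergesTo {X : Type*} (S : X → X → X → ℝ) (r : ℝ) (x : ℕ → X) (p : X) : Prop :=
  ∀ ε : ℝ, 0 < ε → ∃ k : ℕ, ∀ n ≥ k, S (x n) (x n) p < r + ε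

/-- Rough statistical convergence with roughness degree `r`. -/
def SRoughStatConvergesTo {X : Type*} (S : X → X → X → ℝ) (r : ℝ) (x : ℕ → X) (p : X) : Prop :=
  ∀ ε : ℝ, 0 < ε → HasDensity {n : ℕ | r + ε ≤ S (x n) (x n) p} 0

/-- The rough statistical limit set `st-LIM^r x_n`. -/
def stLIM {X : Type*} (S : X → X → X → ℝ) (r : ℝ) (x : ℕ → X) : Set X :=
  {p : X | SRoughStatConvergesTo S r x p}

/-- The topology on `X` generated by the open balls of the S-metric. -/
def sBallTopology {X : Type*} (S : X → X → X → ℝ) : TopologicalSpace X :=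
  TopologicalSpace.generateFrom
    {B : Set X | ∃ c : X, ∃ ε : ℝ, 0 < ε ∧ B = {y : X | S y y c < ε}}


lemma div_le_div_nn {a b c : ℝ} (h : a ≤ b) (hc : 0 ≤ c) : a / c ≤ b / c := by
  rcases hc.eq_or_lt with h0 | h0
  · simp [← h0]
  · gcongr

open scoped Classical in
lemma hd_mono {A B : Set ℕ} (hAB : A ⊆ B) (hB : HasDensity B 0) : HasDensity A 0 := by
  unfold HasDensity at *
  refine tendsto_of_tendsto_of_tendsto_of_le_of_le tendsto_const_nhds hB ?_ ?_
  · intro n; positivity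
  · intro n
    dsimp only
    refine div_le_div_nn ?_ (Nat.cast_nonneg n)
    refine Nat.cast_le.mpr (Finset.card_le_card ?_)
    intro k hk
    simp only [Finset.mem_filter] at *
    exact ⟨hk.1, hAB hk.2⟩

open scoped Classical in
lemma hd_union {A B : Set ℕ} (hA : HasDensity A 0) (hB : HasDensity B 0) :
    HasDensity (A ∪ B) 0 := by
  unfold HasDensity at *
  refine tendsto_of_tendsto_of_tendsto_of_le_of_le tendsto_const_nhds
    (by simpa using hA.add hB) ?_ ?_
  · intro n; positivity
  · intro n
    dsimp only
    rw [← add_div]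
    refine div_le_div_nn ?_ (Nat.cast_nonneg n)
    have key : ((Finset.range n).filter (fun k => k ∈ A ∪ B)).card ≤
        ((Finset.range n).filter (fun k => k ∈ A)).card +
        ((Finset.range n).filter (fun k => k ∈ B)).card := by
      have h1 : ((Finset.range n).filter (fun k => k ∈ A ∪ B)) ⊆
          ((Finset.range n).filter (fun k => k ∈ A)) ∪
          ((Finset.range n).filter (fun k => k ∈ B)) := by
        intro k hk
        simp only [Finset.mem_filter, Set.mem_union, Finset.mem_union] at *
        tauto
      exact le_trans (Finset.card_le_card h1) (Finset.card_union_le _ _)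
    have e := Subsingleton.elim (fun a => Classical.propDecidable (a ∈ A ∪ B))
      (fun a => (A.decidableUnion B a))
    rw [e]
    exact_mod_cast key

open scoped Classical in
lemma hd_exists {A : Set ℕ} (hA : HasDensity A 0) : ∃ n, n ∉ A := by
  by_contra hc
  push_neg at hc
  have heq : ∀ n, ((Finset.range n).filter (fun k => k ∈ A)) = Finset.range n := by
    intro n
    exact Finset.filter_true_of_mem (fun k _ => hc k)
  have h1 : Filter.Tendsto (fun n : ℕ => ((n : ℝ)) / n) Filter.atTop (nhds 0) := by
    have := hA
    unfold HasDensity at this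
    simpa [heq] using this
  have h2 : Filter.Tendsto (fun n : ℕ => ((n : ℝ)) / n) Filter.atTop (nhds 1) := by
    have hev : ∀ᶠ n : ℕ in Filter.atTop, (1 : ℝ) = (n : ℝ) / n := by
      filter_upwards [Filter.eventually_ge_atTop 1] with n hn
      have : (n : ℝ) ≠ 0 := by positivity
      field_simp
    exact Filter.Tendsto.congr' hev tendsto_const_nhds
  exact one_ne_zero (tendsto_nhds_unique h2 h1)

lemma ssym {X : Type*} {S : X → X → X → ℝ} (hS : IsSMetric S) (a b : X) :
    S a a b = S b b a := by
  have h0 : ∀ c : X, S c c c = 0 := fun c => (hS.eq_zero_iff c c c).mpr ⟨rfl, rfl⟩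
  have h1 : ∀ u v : X, S u u v ≤ S v v u := by
    intro u v
    have := hS.triangle u u v u
    simpa [h0] using this
  exact le_antisymm (h1 a b) (h1 b a)

theorem stmt_12 {X : Type*} [Nonempty X] (S : X → X → X → ℝ) (hS : IsSMetric S)
    (r : ℝ) (hr : 0 ≤ r) (x : ℕ → X) (x' : X) (h : SStatConvergesTo S x x') :
    stLIM S r x = {y : X | S y y x' ≤ r} := by
  ext p
  simp only [stLIM, Set.mem_setOf_eq]
  constructor
  · intro hp
    by_contra hlt
    push_neg at hlt
    set d := S p p x' - r with hd
    have hd0 : 0 < d := by linarith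
    have h1 := h (d/4) (by linarith)
    have h2 := hp (d/4) (by linarith)
    obtain ⟨n, hn⟩ := hd_exists (hd_union h1 h2)
    simp only [Set.mem_union, Set.mem_setOf_eq, not_or, not_le] at hn
    obtain ⟨hn1, hn2⟩ := hn
    have key : S p p x' ≤ 2 * S (x n) (x n) x' + S (x n) (x n) p := by
      have ht := hS.triangle x' x' p (x n)
      rw [ssym hS x' p] at ht
      rw [ssym hS x' (x n), ssym hS p (x n)] at ht
      linarith
    linarith
  · intro hp ε hε
    refine hd_mono ?_ (h (ε/2) (by linarith))
    intro n hn
    simp only [Set.mem_setOf_eq] at *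
    have key : S (x n) (x n) p ≤ 2 * S (x n) (x n) x' + S p p x' := by
      have := hS.triangle (x n) (x n) p x'
      linarith
    linarith
end

section
/- Let r ≥ 0, let (x_n) be a sequence in an S-metric space (X,S), and let (ξ_n) be a sequence of points of st-LIM^r x_n that converges to ξ in (X,S). Then ξ ∈ st-LIM^r x_n. -/
open Filter

open scoped Classical in
lemma hasDensity_zero_mono {A B : Set ℕ} (h : A ⊆ B) (hB : HasDensity B 0) :
    HasDensity A 0 := by
  refine squeeze_zero (fun n => by positivity) (fun n => ?_) hB
  gcongr

lemma sMetric_symm {X : Type*} {S : X → X → X → ℝ} (hS : IsSMetric S) (x y : X) :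
    S x x y = S y y x := by
  have h0 : ∀ z : X, S z z z = 0 := fun z => (hS.eq_zero_iff z z z).mpr ⟨rfl, rfl⟩
  have h1 : ∀ a b : X, S a a b ≤ S b b a := fun a b => by
    have := hS.triangle a a b a
    simpa [h0] using this
  exact le_antisymm (h1 x y) (h1 y x)

theorem stmt_13 {X : Type*} [Nonempty X] (S : X → X → X → ℝ) (hS : IsSMetric S)
    (r : ℝ) (hr : 0 ≤ r) (x : ℕ → X) (ξs : ℕ → X) (ξ : X)
    (hmem : ∀ n : ℕ, ξs n ∈ stLIM S r x) (hconv : SConvergesTo S ξs ξ) :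
    ξ ∈ stLIM S r x := by
  intro ε hε
  have hε3 : (0:ℝ) < ε/3 := by linarith
  obtain ⟨N, hN⟩ := hconv (ε/3) hε3
  have hmN := hmem N (ε/3) hε3
  refine hasDensity_zero_mono (fun n hn => ?_) hmN
  simp only [Set.mem_setOf_eq] at hn ⊢
  by_contra hlt
  push_neg at hlt
  have hsym1 : S (x n) (x n) ξ = S ξ ξ (x n) := sMetric_symm hS _ _
  have htri := hS.triangle ξ ξ (x n) (ξs N)
  have hconvN : S (ξs N) (ξs N) ξ < ε/3 := hN N le_rfl
  have hsym2 : S ξ ξ (ξs N) = S (ξs N) (ξs N) ξ := sMetric_symm hS _ _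
  have : S (x n) (x n) ξ < r + ε := by
    rw [hsym1]
    calc S ξ ξ (x n) ≤ S ξ ξ (ξs N) + S ξ ξ (ξs N) + S (x n) (x n) (ξs N) := htri
    _ < ε/3 + ε/3 + (r + ε/3) := by rw [hsym2]; linarith
    _ = r + ε := by ring
  linarith
end
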